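/- Let n = m·d, let σ ∈ Φ_d be given by σ(j) = uj + v with u ∈ (ℤ/dℤ)*, v ∈ ℤ/dℤ, and let σ̃ ∈ Φ_n be given by σ̃(i) = ũ·i + ṽ where ũ ∈ (ℤ/nℤ)* reduces to u mod d and ṽ ∈ ℤ/nℤ reduces to v mod d. Then compression commutes with these actions: c_{n,d} ∘ σ̃^{-1} = σ^{-1} ∘ c_{n,d} as maps on integer sequences of length n. -/

import Mathlib

theorem no_cw_stmt5 (n m d : ℕ) [NeZero n] [NeZero d] (hn : n = m * d)
    (hd : d ∣ n)
    (u : (ZMod d)ˣ) (v : ZMod d) (utld : (ZMod n)ˣ) (vtld : ZMod n)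
    (hu : ZMod.castHom hd (ZMod d) (utld : ZMod n) = (u : ZMod d))
    (hv : ZMod.castHom hd (ZMod d) vtld = v)
    (x : ZMod n → ℤ) :
    ∀ j : ZMod d,
      ∑ k ∈ Finset.range m,
        x ((utld : ZMod n) * (((j.val : ZMod n) + (k : ZMod n) * (d : ZMod n))) + vtld) =
      ∑ k ∈ Finset.range m,
        x ((((u : ZMod d) * j + v).val : ZMod n) + (k : ZMod n) * (d : ZMod n)) := by
  intro j
  have hdpos : 0 < d := Nat.pos_of_ne_zero (NeZero.ne d)
  set t : ZMod d := (u : ZMod d) * j + v with ht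
  set A : ℕ → ZMod n := fun k =>
    (utld : ZMod n) * (((j.val : ZMod n) + (k : ZMod n) * (d : ZMod n))) + vtld with hA
  have hcast : ∀ k : ℕ, ZMod.castHom hd (ZMod d) (A k) = t := by
    intro k
    simp only [hA, map_add, map_mul, map_natCast, hu, hv]
    rw [ZMod.natCast_val, ZMod.cast_id, ZMod.natCast_self, mul_zero, add_zero, ht]
  have hmod : ∀ k : ℕ, (A k).val % d = t.val := by
    intro k
    have h0 := hcast k
    rw [ZMod.castHom_apply] at h0
    have h3 : ((A k).val : ZMod d) = t := by
      rw [ZMod.natCast_val]; exact h0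
    calc (A k).val % d = (((A k).val : ZMod d)).val := (ZMod.val_natCast _ _).symm
    _ = t.val := by rw [h3]
  have hdecomp : ∀ k : ℕ, (A k).val = t.val + ((A k).val / d) * d := by
    intro k
    have h2 := hmod k
    calc (A k).val = (A k).val % d + d * ((A k).val / d) := (Nat.mod_add_div _ _).symm
    _ = t.val + ((A k).val / d) * d := by rw [h2, Nat.mul_comm]
  have hlt : ∀ k : ℕ, (A k).val / d < m := by
    intro k
    have h1 : (A k).val < n := ZMod.val_lt _
    exact (Nat.div_lt_iff_lt_mul hdpos).mpr (lt_of_lt_of_eq h1 hn)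
  have hrec : ∀ k : ℕ, A k = ((t.val : ℕ) : ZMod n) + (((A k).val / d : ℕ) : ZMod n) * (d : ZMod n) := by
    intro k
    have hv2 : (((t.val + ((A k).val / d) * d : ℕ)) : ZMod n) = A k := by
      rw [← hdecomp k, ZMod.natCast_val, ZMod.cast_id]
    conv_lhs => rw [← hv2]
    push_cast
    ring
  have fact1 : ∀ a b : ℕ, a < m → b < m →
      ((a : ZMod n) * (d : ZMod n) = (b : ZMod n) * (d : ZMod n)) → a = b := by
    intro a b ha hb h
    have h' : (((a * d : ℕ)) : ZMod n) = (((b * d : ℕ)) : ZMod n) := by push_cast; exact h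
    have ha' : a * d < n := by rw [hn]; exact (Nat.mul_lt_mul_right hdpos).mpr ha
    have hb' : b * d < n := by rw [hn]; exact (Nat.mul_lt_mul_right hdpos).mpr hb
    have hval := congrArg ZMod.val h'
    rw [ZMod.val_cast_of_lt ha', ZMod.val_cast_of_lt hb'] at hval
    exact Nat.eq_of_mul_eq_mul_right hdpos hval
  have hAinj : ∀ a b : ℕ, a < m → b < m → A a = A b → a = b := by
    intro a b ha hb h
    simp only [hA] at h
    have h1 := add_right_cancel h
    have h2 := (Units.mul_right_inj utld).mp h1
    have h3 := add_left_cancel h2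
    exact fact1 a b ha hb h3
  set i : ℕ → ℕ := fun k => (A k).val / d with hi
  have hmaps : ∀ k ∈ Finset.range m, i k ∈ Finset.range m := by
    intro k _; simpa [hi] using hlt k
  have hinj : Set.InjOn i (Finset.range m) := by
    intro a ha b hb h
    simp only [Finset.coe_range, Set.mem_Iio] at ha hb
    have h1 := hdecomp a
    have h2 := hdecomp b
    simp only [hi] at h
    have hvals : (A a).val = (A b).val := by rw [h1, h2, h]
    exact hAinj a b ha hb (ZMod.val_injective _ hvals)
  have hsurj : Set.SurjOn i (Finset.range m) (Finset.range m) := by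
    intro b hb
    simp only [Finset.coe_range, Set.mem_Iio] at hb
    obtain ⟨a, ha, hba⟩ := Finset.surj_on_of_inj_on_of_card_le (s := Finset.range m)
      (t := Finset.range m) (fun a _ => i a) (fun a ha => hmaps a ha)
      (fun a₁ a₂ ha₁ ha₂ h => hinj (by simpa using ha₁) (by simpa using ha₂) h)
      le_rfl b (Finset.mem_range.mpr hb)
    exact ⟨a, by simpa using ha, hba.symm⟩
  refine Finset.sum_nbij i hmaps hinj hsurj ?_
  intro k _
  exact congrArg x (hrec k)
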